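/- Star tree edge sums are integer linear combinations of the edge sums of any tree: with the setup of antisymmetric γ_{ij} and Γ_e as above, let T' be the star tree on {1,…,n} with center n, so Γ'_{e_i} = Σ_{j=1}^n γ_{ij} for i=1,…,n−1. For any unrooted labelled tree T on {1,…,n}, define M_{ie} = +1 if vertex i is the source of edge e, −1 if it is the target, 0 otherwise. Then Γ'_{e_i} = Σ_{e ∈ E_T} M_{ie} Γ_e for every i. -/

import Mathlib

open scoped Classical

noncomputable def edgeSum {n : ℕ} (γ : Fin n → Fin n → ℝ) (T : SimpleGraph (Fin n))
    (i j : Fin n) : ℝ :=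
  ∑ k, ∑ l,
    if (T.deleteEdges {s(i, j)}).Reachable k i ∧ (T.deleteEdges {s(i, j)}).Reachable l j
    then γ k l else 0

def starTree (n : ℕ) : SimpleGraph (Fin (n + 1)) :=
  SimpleGraph.fromRel fun _ j => j = Fin.last n

section Aux
variable {V : Type*}

lemma aux_not_reach_of_tree {G : SimpleGraph V} (hG : G.IsTree) {i j : V} (h : G.Adj i j) :
    ¬ (G.deleteEdges {s(i,j)}).Reachable i j := by
  have hb : G.IsBridge s(i, j) :=
    (SimpleGraph.isAcyclic_iff_forall_edge_isBridge.mp hG.2) h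
  exact SimpleGraph.isBridge_iff.mp hb

lemma aux_cover {G : SimpleGraph V} (i j : V) :
    ∀ {a c : V} (_ : G.Walk a c), c = i →
      (G.deleteEdges {s(i,j)}).Reachable a i ∨ (G.deleteEdges {s(i,j)}).Reachable a j := by
  intro a c w
  induction w with
  | nil => rintro rfl; exact Or.inl (SimpleGraph.Reachable.refl _)
  | @cons a b c hab p ih =>
    rintro rfl
    by_cases he : s(a, b) = s(c, j)
    · rw [Sym2.eq_iff] at he
      rcases he with ⟨rfl, rfl⟩ | ⟨rfl, rfl⟩
      · exact Or.inl (SimpleGraph.Reachable.refl _)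
      · exact Or.inr (SimpleGraph.Reachable.refl _)
    · have hadj : (G.deleteEdges {s(c,j)}).Adj a b := by
        rw [SimpleGraph.deleteEdges_adj]
        exact ⟨hab, by simpa using he⟩
      rcases ih rfl with h | h
      · exact Or.inl (hadj.reachable.trans h)
      · exact Or.inr (hadj.reachable.trans h)

lemma aux_reach_iff_not {G : SimpleGraph V} (hG : G.IsTree) {i j : V} (h : G.Adj i j) (a : V) :
    (G.deleteEdges {s(i,j)}).Reachable a i ↔ ¬ (G.deleteEdges {s(i,j)}).Reachable a j := by
  constructor
  · intro h1 h2
    exact aux_not_reach_of_tree hG h (h1.symm.trans h2)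
  · intro h2
    rcases aux_cover i j ((hG.1.preconnected a i).some) rfl with h1 | h1
    · exact h1
    · exact absurd h1 h2

lemma aux_unique_nbr {G : SimpleGraph V} (hG : G.IsTree) {i a : V} (hne : a ≠ i) :
    ∃! j, G.Adj i j ∧ ¬ (G.deleteEdges {s(i,j)}).Reachable a i := by
  obtain ⟨w0⟩ := hG.1.preconnected i a
  set p := w0.toPath with hp
  have hpath : p.1.IsPath := p.2
  have hnn : ¬ p.1.Nil := SimpleGraph.Walk.not_nil_of_ne (Ne.symm hne)
  obtain ⟨j0, hj0, q, hq⟩ := SimpleGraph.Walk.not_nil_iff.mp hnn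
  rw [hq, SimpleGraph.Walk.cons_isPath_iff] at hpath
  have hins : i ∉ q.support := hpath.2
  have hqe : ∀ j, s(i, j) ∉ q.edges := by
    intro j hmem
    exact hins (SimpleGraph.Walk.fst_mem_support_of_mem_edges q hmem)
  refine ⟨j0, ⟨hj0, ?_⟩, ?_⟩
  · intro hre
    have hq' : (G.deleteEdges {s(i,j0)}).Reachable j0 a := by
      refine ⟨q.toDeleteEdges _ ?_⟩
      intro e he hes
      rw [Set.mem_singleton_iff] at hes
      subst hes
      exact hqe j0 he
    exact aux_not_reach_of_tree hG hj0 (hq'.trans hre).symm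
  · intro j hj
    obtain ⟨hadj, hnr⟩ := hj
    by_contra hjne
    have hfull : ∀ e ∈ (SimpleGraph.Walk.cons hj0 q).edges, e ∉ ({s(i,j)} : Set (Sym2 V)) := by
      intro e he hes
      rw [Set.mem_singleton_iff] at hes; subst hes
      rw [SimpleGraph.Walk.edges_cons] at he
      rcases List.mem_cons.mp he with h | h
      · exact hjne (Sym2.congr_right.mp h)
      · exact hqe j h
    exact hnr ⟨((SimpleGraph.Walk.cons hj0 q).toDeleteEdges _ hfull).reverse⟩

lemma aux_ite_inst_ext {α : Sort*} {c : Prop} (i1 i2 : Decidable c) (x y : α) :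
    @ite α c i1 x y = @ite α c i2 x y := by
  cases Subsingleton.elim i1 i2; rfl

lemma aux_skew_sum_zero [Fintype V] (γ : V → V → ℝ) (hγ : ∀ i j, γ i j = -γ j i)
    (P : V → Prop) :
    ∑ a, ∑ b, (if P a ∧ P b then γ a b else 0) = 0 := by
  have key : (∑ a, ∑ b, if P a ∧ P b then γ a b else 0)
      = -∑ a, ∑ b, (if P a ∧ P b then γ a b else 0) := by
    conv_lhs => rw [Finset.sum_comm]
    rw [← Finset.sum_neg_distrib]
    refine Finset.sum_congr rfl fun b _ => ?_
    rw [← Finset.sum_neg_distrib]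
    refine Finset.sum_congr rfl fun a _ => ?_
    by_cases h1 : P a <;> by_cases h2 : P b <;> simp [h1, h2, hγ a b]
  linarith

lemma aux_bipartite_sum [Fintype V] (γ : V → V → ℝ) (hγ : ∀ i j, γ i j = -γ j i)
    (R : V → Prop) :
    ∑ a, ∑ b, (if R a ∧ ¬ R b then γ a b else 0)
      = ∑ a, (if R a then ∑ b, γ a b else 0) := by
  have h1 : ∀ a b, (if R a ∧ ¬R b then γ a b else 0)
      = (if R a then γ a b else 0) - (if R a ∧ R b then γ a b else 0) := by
    intro a b; by_cases h1 : R a <;> by_cases h2 : R b <;> simp [h1, h2]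
  calc ∑ a, ∑ b, (if R a ∧ ¬ R b then γ a b else 0)
      = ∑ a, ∑ b, ((if R a then γ a b else 0) - (if R a ∧ R b then γ a b else 0)) := by
        exact Finset.sum_congr rfl fun a _ => Finset.sum_congr rfl fun b _ => h1 a b
    _ = (∑ a, ∑ b, (if R a then γ a b else 0))
        - ∑ a, ∑ b, (if R a ∧ R b then γ a b else 0) := by
        rw [← Finset.sum_sub_distrib]
        exact Finset.sum_congr rfl fun a _ => (Finset.sum_sub_distrib _ _)
    _ = ∑ a, ∑ b, (if R a then γ a b else 0) := by
        rw [aux_skew_sum_zero γ hγ R]; ring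
    _ = ∑ a, (if R a then ∑ b, γ a b else 0) := by
        refine Finset.sum_congr rfl fun a _ => ?_
        by_cases h : R a <;> simp [h]

end Aux

set_option maxHeartbeats 1000000 in
lemma aux_edgeSum_tree_eq {n : ℕ} (γ : Fin n → Fin n → ℝ) (hγ : ∀ i j, γ i j = -γ j i)
    {T : SimpleGraph (Fin n)} (hT : T.IsTree) {k l : Fin n} (h : T.Adj k l) :
    edgeSum γ T k l
      = ∑ a, (if (T.deleteEdges {s(k,l)}).Reachable a k then ∑ b, γ a b else 0) := by
  calc edgeSum γ T k l
      = ∑ a, ∑ b, (if (T.deleteEdges {s(k,l)}).Reachable a k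
          ∧ ¬ (T.deleteEdges {s(k,l)}).Reachable b k then γ a b else 0) := by
        rw [edgeSum]
        refine Finset.sum_congr rfl fun a _ => Finset.sum_congr rfl fun b _ => ?_
        have hb := aux_reach_iff_not hT h b
        refine if_congr (and_congr Iff.rfl ?_) rfl rfl
        tauto
    _ = ∑ a, (if (T.deleteEdges {s(k,l)}).Reachable a k then ∑ b, γ a b else 0) := by
        have H := aux_bipartite_sum γ hγ (fun a => (T.deleteEdges {s(k,l)}).Reachable a k)
        refine Eq.trans (Eq.trans ?_ H) ?_
        · exact Finset.sum_congr rfl fun a _ => Finset.sum_congr rfl fun b _ =>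
            aux_ite_inst_ext _ _ _ _
        · exact Finset.sum_congr rfl fun a _ => aux_ite_inst_ext _ _ _ _

set_option maxHeartbeats 2000000 in
theorem star_edgeSum_eq_lin_comb (n : ℕ) (γ : Fin (n + 1) → Fin (n + 1) → ℝ)
    (hγ : ∀ i j, γ i j = - γ j i)
    (T : SimpleGraph (Fin (n + 1))) (hT : T.IsTree)
    (E : Fin (n + 1) → Fin (n + 1) → Prop)
    (hE : ∀ i j, T.Adj i j ↔ (E i j ∨ E j i))
    (hE' : ∀ i j, E i j → ¬ E j i) :
    ∀ i : Fin (n + 1), i ≠ Fin.last n →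
      (edgeSum γ (starTree n) i (Fin.last n) = ∑ j, γ i j ∧
       edgeSum γ (starTree n) i (Fin.last n) =
         ∑ k, ∑ l, if E k l then
           (if i = k then (1 : ℝ) else if i = l then -1 else 0) * edgeSum γ T k l
         else 0) := by
  intro i hi
  have hγii : ∀ a, γ a a = 0 := fun a => by have := hγ a a; linarith
  -- star graph reachability facts
  have hiso : ∀ b, ¬ ((starTree n).deleteEdges {s(i, Fin.last n)}).Adj i b := by
    intro b hb
    rw [SimpleGraph.deleteEdges_adj] at hb
    obtain ⟨hadj, hne⟩ := hb
    rw [starTree, SimpleGraph.fromRel_adj] at hadj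
    obtain ⟨hib, h2⟩ := hadj
    rcases h2 with rfl | rfl
    · exact hne rfl
    · exact hi rfl
  have hri : ∀ k, ((starTree n).deleteEdges {s(i, Fin.last n)}).Reachable k i ↔ k = i := by
    intro k
    constructor
    · intro hr
      obtain ⟨w⟩ := hr.symm
      cases w with
      | nil => rfl
      | cons h p => exact absurd h (hiso _)
    · rintro rfl; exact SimpleGraph.Reachable.refl _
  have hrl : ∀ l, ((starTree n).deleteEdges {s(i, Fin.last n)}).Reachable l (Fin.last n)
      ↔ l ≠ i := by
    intro l
    constructor
    · intro hr hl
      subst hl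
      exact hi (((hri (Fin.last n)).mp hr.symm).symm)
    · intro hl
      by_cases hll : l = Fin.last n
      · subst hll; exact SimpleGraph.Reachable.refl _
      · refine SimpleGraph.Adj.reachable ?_
        rw [SimpleGraph.deleteEdges_adj]
        constructor
        · rw [starTree, SimpleGraph.fromRel_adj]
          exact ⟨hll, Or.inl rfl⟩
        · intro hmem
          rw [Set.mem_singleton_iff, Sym2.eq_iff] at hmem
          rcases hmem with ⟨h1, h2⟩ | ⟨h1, h2⟩
          · exact hl h1
          · exact hi h2.symm
  -- part 1
  have part1 : edgeSum γ (starTree n) i (Fin.last n) = ∑ j, γ i j := by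
    rw [edgeSum]
    have h1 : ∀ k l : Fin (n+1),
        (if ((starTree n).deleteEdges {s(i, Fin.last n)}).Reachable k i
            ∧ ((starTree n).deleteEdges {s(i, Fin.last n)}).Reachable l (Fin.last n)
         then γ k l else 0)
        = if k = i then (if l = i then 0 else γ k l) else 0 := by
      intro k l
      by_cases e1 : k = i <;> by_cases e2 : l = i <;> simp [e1, e2, hri, hrl]
    simp only [h1]
    have h2 : ∀ k : Fin (n+1), (∑ l, if k = i then (if l = i then 0 else γ k l) else 0)
        = if k = i then (∑ l, if l = i then 0 else γ k l) else 0 := by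
      intro k; by_cases e : k = i <;> simp [e]
    simp only [h2, Finset.sum_ite_eq', Finset.mem_univ, if_true]
    refine Finset.sum_congr rfl fun l _ => ?_
    by_cases hl : l = i <;> simp [hl, hγii]
  refine ⟨part1, ?_⟩
  -- part 2
  have hAdjE : ∀ k l, E k l → T.Adj k l := fun k l h => (hE k l).mpr (Or.inl h)
  have hTrw : ∀ k l, E k l → edgeSum γ T k l
      = ∑ a, (if (T.deleteEdges {s(k,l)}).Reachable a k then ∑ b, γ a b else 0) :=
    fun k l h => aux_edgeSum_tree_eq γ hγ hT (hAdjE k l h)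
  have hg0 : (∑ a, ∑ b, γ a b) = 0 := by
    have := aux_skew_sum_zero γ hγ (fun _ => True)
    simpa using this
  -- split the matrix sum
  have hsplit : ∀ k l : Fin (n+1),
      (if E k l then (if i = k then (1:ℝ) else if i = l then -1 else 0) * edgeSum γ T k l
       else 0)
      = (if k = i then (if E k l then edgeSum γ T k l else 0) else 0)
      + (if l = i then (if E k l then -edgeSum γ T k l else 0) else 0) := by
    intro k l
    by_cases hkl : E k l
    · have hne : k ≠ l := (hAdjE k l hkl).ne
      by_cases hk : k = i
      · have hl : l ≠ i := fun h => hne (hk.trans h.symm)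
        have hik : i = k := hk.symm
        rw [if_pos hkl, if_pos hik, if_pos hk, if_pos hkl, if_neg hl, one_mul, add_zero]
      · by_cases hl : l = i
        · have hik : ¬ i = k := fun h => hk h.symm
          have hil : i = l := hl.symm
          rw [if_pos hkl, if_neg hik, if_pos hil, if_neg hk, if_pos hl, if_pos hkl,
            neg_one_mul, zero_add]
        · have hik : ¬ i = k := fun h => hk h.symm
          have hil : ¬ i = l := fun h => hl h.symm
          rw [if_pos hkl, if_neg hik, if_neg hil, if_neg hk, if_neg hl, zero_mul, add_zero]
    · simp [hkl]
  have step1 : (∑ k, ∑ l, if E k l then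
        (if i = k then (1 : ℝ) else if i = l then -1 else 0) * edgeSum γ T k l else 0)
      = (∑ l, (if E i l then edgeSum γ T i l else 0))
        + (∑ k, (if E k i then -edgeSum γ T k i else 0)) := by
    simp only [hsplit, Finset.sum_add_distrib]
    congr 1
    · have h3 : ∀ k : Fin (n+1),
          (∑ l, if k = i then (if E k l then edgeSum γ T k l else 0) else 0)
          = if k = i then (∑ l, if E k l then edgeSum γ T k l else 0) else 0 := by
        intro k; by_cases e : k = i <;> simp [e]
      simp only [h3, Finset.sum_ite_eq', Finset.mem_univ, if_true]
    · rw [Finset.sum_comm]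
      have h3 : ∀ l : Fin (n+1),
          (∑ k, if l = i then (if E k l then -edgeSum γ T k l else 0) else 0)
          = if l = i then (∑ k, if E k l then -edgeSum γ T k l else 0) else 0 := by
        intro l; by_cases e : l = i <;> simp [e]
      simp only [h3, Finset.sum_ite_eq', Finset.mem_univ, if_true]
  rw [part1, step1]
  -- rewrite the two families of edge sums via reachability indicators
  have hS1 : (∑ l, (if E i l then edgeSum γ T i l else 0))
      = ∑ a, ∑ l, (if E i l ∧ (T.deleteEdges {s(i,l)}).Reachable a i
          then ∑ b, γ a b else 0) := by
    rw [Finset.sum_comm]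
    refine Finset.sum_congr rfl fun l _ => ?_
    by_cases h : E i l
    · rw [if_pos h, hTrw i l h]
      refine Finset.sum_congr rfl fun a _ => ?_
      simp [h]
    · simp [h]
  have hswap : ∀ k, E k i → ∀ a : Fin (n+1),
      ((T.deleteEdges {s(k,i)}).Reachable a k
        ↔ ¬ (T.deleteEdges {s(i,k)}).Reachable a i) := by
    intro k hk a
    have hsym : s(k,i) = s(i,k) := Sym2.eq_swap
    rw [hsym]
    have h2 := aux_reach_iff_not hT ((hAdjE k i hk).symm) a
    tauto
  have hS2 : (∑ k, (if E k i then -edgeSum γ T k i else 0))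
      = ∑ a, ∑ k, (if E k i then
          ((if (T.deleteEdges {s(i,k)}).Reachable a i then ∑ b, γ a b else 0)
            - ∑ b, γ a b) else 0) := by
    rw [Finset.sum_comm]
    refine Finset.sum_congr rfl fun k _ => ?_
    by_cases h : E k i
    · rw [if_pos h, hTrw k i h]
      rw [← Finset.sum_neg_distrib]
      refine Finset.sum_congr rfl fun a _ => ?_
      rw [if_pos h]
      by_cases hr : (T.deleteEdges {s(i,k)}).Reachable a i
      · have : ¬ (T.deleteEdges {s(k,i)}).Reachable a k := by
          rw [hswap k h a]; simpa using hr
        simp [this, hr]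
      · have : (T.deleteEdges {s(k,i)}).Reachable a k := (hswap k h a).mpr hr
        simp [this, hr]
    · simp [h]
  rw [hS1, hS2, ← Finset.sum_add_distrib]
  -- now a single sum over a
  have hcomb : ∀ a : Fin (n+1),
      ((∑ l, (if E i l ∧ (T.deleteEdges {s(i,l)}).Reachable a i then ∑ b, γ a b else 0))
        + ∑ k, (if E k i then
            ((if (T.deleteEdges {s(i,k)}).Reachable a i then ∑ b, γ a b else 0)
              - ∑ b, γ a b) else 0))
      = (∑ j, (if T.Adj i j ∧ (T.deleteEdges {s(i,j)}).Reachable a i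
          then ∑ b, γ a b else 0))
        - (∑ j, if E j i then (1:ℝ) else 0) * (∑ b, γ a b) := by
    intro a
    rw [← Finset.sum_add_distrib, Finset.sum_mul, ← Finset.sum_sub_distrib]
    refine Finset.sum_congr rfl fun j _ => ?_
    by_cases h1 : E i j <;> by_cases h2 : E j i
    · exact absurd h2 (hE' i j h1)
    · have hadj : T.Adj i j := hAdjE i j h1
      by_cases hr : (T.deleteEdges {s(i,j)}).Reachable a i <;> simp [h1, h2, hadj, hr]
    · have hadj : T.Adj i j := (hAdjE j i h2).symm
      by_cases hr : (T.deleteEdges {s(i,j)}).Reachable a i <;> simp [h1, h2, hadj, hr]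
    · have hnadj : ¬ T.Adj i j := by rw [hE]; tauto
      simp [h1, h2, hnadj]
  simp only [hcomb]
  -- evaluate the adjacency-reachability count
  have hN : ∀ a : Fin (n+1),
      (∑ j, (if T.Adj i j ∧ (T.deleteEdges {s(i,j)}).Reachable a i
          then ∑ b, γ a b else 0))
      = ((∑ j, if T.Adj i j then (1:ℝ) else 0) - 1 + (if a = i then 1 else 0))
          * (∑ b, γ a b) := by
    intro a
    by_cases ha : a = i
    · rw [if_pos ha]
      have hd : ((∑ j, if T.Adj i j then (1:ℝ) else 0) - 1 + 1)
          = ∑ j, if T.Adj i j then (1:ℝ) else 0 := by ring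
      rw [hd, Finset.sum_mul]
      refine Finset.sum_congr rfl fun j _ => ?_
      have hra : (T.deleteEdges {s(i,j)}).Reachable a i := by rw [ha]
      by_cases h : T.Adj i j <;> simp [h, hra]
    · obtain ⟨j0, ⟨hj0a, hj0r⟩, hju⟩ := aux_unique_nbr hT ha
      have hpt : ∀ j : Fin (n+1),
          (if T.Adj i j ∧ (T.deleteEdges {s(i,j)}).Reachable a i then ∑ b, γ a b else 0)
          = (if T.Adj i j then (1:ℝ) else 0) * (∑ b, γ a b)
            - (if T.Adj i j ∧ ¬ (T.deleteEdges {s(i,j)}).Reachable a i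
                then ∑ b, γ a b else 0) := by
        intro j
        by_cases h1 : T.Adj i j <;>
          by_cases h2 : (T.deleteEdges {s(i,j)}).Reachable a i <;> simp [h1, h2]
      rw [Finset.sum_congr rfl fun j _ => hpt j, Finset.sum_sub_distrib, ← Finset.sum_mul]
      have huniq : (∑ j, (if T.Adj i j ∧ ¬ (T.deleteEdges {s(i,j)}).Reachable a i
          then ∑ b, γ a b else 0)) = ∑ b, γ a b := by
        rw [Finset.sum_eq_single j0]
        · rw [if_pos ⟨hj0a, hj0r⟩]
        · intro j _ hj
          rw [if_neg]
          intro hcon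
          exact hj (hju j hcon)
        · intro h; exact absurd (Finset.mem_univ j0) h
      rw [huniq, if_neg ha]
      ring
  simp only [hN]
  -- final algebra
  have hfin : ∀ a : Fin (n+1),
      (((∑ j, if T.Adj i j then (1:ℝ) else 0) - 1 + (if a = i then 1 else 0))
          * (∑ b, γ a b))
        - (∑ j, if E j i then (1:ℝ) else 0) * (∑ b, γ a b)
      = ((∑ j, if T.Adj i j then (1:ℝ) else 0) - 1
          - (∑ j, if E j i then (1:ℝ) else 0)) * (∑ b, γ a b)
        + (if a = i then (∑ b, γ a b) else 0) := by
    intro a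
    by_cases ha : a = i <;> simp [ha] <;> ring
  simp only [hfin]
  rw [Finset.sum_add_distrib, ← Finset.mul_sum, hg0, mul_zero, zero_add]
  simp
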